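/- Let 1 < k < n. The connected subgraph arrangement 𝒜_{Δ_{n,k}} in ℚ^{n+1} is the restriction of 𝒜_{A_{n+1,k+1}} (an arrangement in ℚ^{n+2}) to the coordinate hyperplane ker(x_{k+1}): after identifying ker(x_{k+1}) ⊆ ℚ^{n+2} with ℚ^{n+1} by deleting the (k+1)-st coordinate (i.e. relabeling x_i ↦ x_{i−1} for k+2 ≤ i ≤ n+2), the set {H ∩ ker(x_{k+1}) : H ∈ 𝒜_{A_{n+1,k+1}}, H ≠ ker(x_{k+1})} equals the set of hyperplanes of 𝒜_{Δ_{n,k}}. -/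

import Mathlib

open Finset

set_option maxHeartbeats 1600000

/-- The linear form `∑_{i ∈ I} x_i` on `ℚ^n`. -/
noncomputable def linForm {n : ℕ} (I : Finset (Fin n)) : (Fin n → ℚ) →ₗ[ℚ] ℚ :=
  ∑ i ∈ I, LinearMap.proj i

/-- `I` is a nonempty subset of vertices inducing a connected subgraph of `G`. -/
def ConnSet {n : ℕ} (G : SimpleGraph (Fin n)) (I : Finset (Fin n)) : Prop :=
  I.Nonempty ∧ (G.induce (↑I : Set (Fin n))).Connected

/-- The connected subgraph arrangement of `G`, as a set of hyperplanes of `ℚ^n`. -/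
def csa {n : ℕ} (G : SimpleGraph (Fin n)) : Set (Submodule ℚ (Fin n → ℚ)) :=
  {H | ∃ I : Finset (Fin n), ConnSet G I ∧ H = LinearMap.ker (linForm I)}

/-- The almost path graph `A_{n,k}` (paper notation, vertices `1,…,n+1` realized as
`Fin (n+1)` with `0,…,n`): a path `1–⋯–n` together with the edge `{k, n+1}`. -/
def almostPath (n k : ℕ) : SimpleGraph (Fin (n + 1)) :=
  SimpleGraph.fromRel (fun a b =>
    (a.val + 1 = b.val ∧ b.val < n) ∨ (a.val = k - 1 ∧ b.val = n))

/-- The path-with-triangle graph `Δ_{n,k}` (paper notation): a path `1–⋯–n` together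
with the edges `{k, n+1}` and `{k+1, n+1}`. -/
def pathTriangle (n k : ℕ) : SimpleGraph (Fin (n + 1)) :=
  SimpleGraph.fromRel (fun a b =>
    (a.val + 1 = b.val ∧ b.val < n) ∨ (a.val = k - 1 ∧ b.val = n) ∨ (a.val = k ∧ b.val = n))

/-- The module of `𝒜_G`-derivations `D(𝒜_G) ⊆ Der_ℚ(ℚ[x_1,…,x_n])`. -/
noncomputable def derModule {n : ℕ} (G : SimpleGraph (Fin n)) :
    Submodule (MvPolynomial (Fin n) ℚ)
      (Derivation ℚ (MvPolynomial (Fin n) ℚ) (MvPolynomial (Fin n) ℚ)) where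
  carrier := {θ | ∀ I : Finset (Fin n), ConnSet G I →
    (∑ i ∈ I, MvPolynomial.X i) ∣ θ (∑ i ∈ I, MvPolynomial.X i)}
  add_mem' := by
    intro a b ha hb I hI
    rw [Derivation.add_apply]
    exact dvd_add (ha I hI) (hb I hI)
  zero_mem' := by
    intro I hI
    simp
  smul_mem' := by
    intro c θ hθ I hI
    rw [Derivation.smul_apply, smul_eq_mul]
    exact (hθ I hI).mul_left c

/-- The linear isomorphism of `ℚ^{n+1}` onto the coordinate hyperplane
`ker x_p ⊆ ℚ^{n+2}`: it inserts a zero at position `p` (i.e. it realizes the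
identification of `ker x_p` with `ℚ^{n+1}` obtained by deleting the `p`-th coordinate
and relabeling the later coordinates). -/
noncomputable def insertZero {n : ℕ} (p : Fin (n + 2)) :
    (Fin (n + 1) → ℚ) →ₗ[ℚ] (Fin (n + 2) → ℚ) :=
  LinearMap.pi fun i =>
    if h : ∃ m : Fin (n + 1), p.succAbove m = i
    then (LinearMap.proj h.choose : (Fin (n + 1) → ℚ) →ₗ[ℚ] ℚ)
    else 0

lemma insertZero_apply_succAbove {n : ℕ} (p : Fin (n+2)) (x : Fin (n+1) → ℚ) (m : Fin (n+1)) :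
    insertZero p x (p.succAbove m) = x m := by
  unfold insertZero
  rw [LinearMap.pi_apply, dif_pos ⟨m, rfl⟩]
  have h : ∃ m' : Fin (n+1), p.succAbove m' = p.succAbove m := ⟨m, rfl⟩
  have := h.choose_spec
  have hm : h.choose = m := Fin.succAbove_right_injective this
  rw [LinearMap.proj_apply]
  exact congrArg x hm

lemma insertZero_apply_self {n : ℕ} (p : Fin (n+2)) (x : Fin (n+1) → ℚ) :
    insertZero p x p = 0 := by
  unfold insertZero
  rw [LinearMap.pi_apply, dif_neg]
  · rfl
  · rintro ⟨m, hm⟩; exact Fin.succAbove_ne p m hm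

def del {n : ℕ} (p : Fin (n+2)) (I : Finset (Fin (n+2))) : Finset (Fin (n+1)) :=
  univ.filter (fun m => p.succAbove m ∈ I)

lemma linForm_comp {n : ℕ} (p : Fin (n+2)) (I : Finset (Fin (n+2))) :
    (linForm I).comp (insertZero p) = linForm (del p I) := by
  apply LinearMap.ext
  intro x
  have h1 : (linForm I).comp (insertZero p) x = ∑ i ∈ I, insertZero p x i := by
    simp [linForm, LinearMap.sum_apply]
  rw [h1]
  have h2 : linForm (del p I) x = ∑ m ∈ del p I, x m := by
    simp [linForm, LinearMap.sum_apply]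
  rw [h2]
  rw [← Finset.sum_erase I (f := fun i => insertZero p x i) (insertZero_apply_self p x)]
  have himg : I.erase p = (del p I).image p.succAbove := by
    ext i
    simp only [Finset.mem_erase, Finset.mem_image, del, Finset.mem_filter, Finset.mem_univ,
      true_and]
    constructor
    · rintro ⟨hne, hi⟩
      obtain ⟨m, hm⟩ := Fin.exists_succAbove_eq hne
      exact ⟨m, hm ▸ hi, hm⟩
    · rintro ⟨m, hm, rfl⟩
      exact ⟨Fin.succAbove_ne p m, hm⟩
  rw [himg, Finset.sum_image (fun a _ b _ h => Fin.succAbove_right_injective h)]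
  exact Finset.sum_congr rfl (fun m _ => insertZero_apply_succAbove p x m)

lemma comap_ker {n : ℕ} (p : Fin (n+2)) (I : Finset (Fin (n+2))) :
    Submodule.comap (insertZero p) (LinearMap.ker (linForm I)) =
      LinearMap.ker (linForm (del p I)) := by
  rw [← linForm_comp, LinearMap.ker_comp]

lemma linForm_ker_ne_top {n : ℕ} {J : Finset (Fin n)} (hJ : J.Nonempty) :
    LinearMap.ker (linForm J) ≠ ⊤ := by
  obtain ⟨j, hj⟩ := hJ
  intro h
  rw [LinearMap.ker_eq_top] at h
  have := congrFun (congrArg DFunLike.coe h) (Pi.single j 1)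
  simp only [linForm, LinearMap.sum_apply, LinearMap.proj_apply, LinearMap.zero_apply] at this
  rw [Finset.sum_eq_single j (fun b _ hb => Pi.single_eq_of_ne hb 1) (fun h' => absurd hj h')] at this
  simp at this

lemma linForm_singleton {n : ℕ} (p : Fin n) : linForm {p} = LinearMap.proj p := by
  simp [linForm]

lemma proj_comp_insertZero {n : ℕ} (p : Fin (n+2)) :
    (LinearMap.proj p : (Fin (n+2) → ℚ) →ₗ[ℚ] ℚ).comp (insertZero p) = 0 := by
  apply LinearMap.ext
  intro x
  simp [insertZero_apply_self p x]

lemma reachable_map {V W : Type*} {G : SimpleGraph V} {H : SimpleGraph W} (f : V → W)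
    (hf : ∀ a b, G.Adj a b → H.Reachable (f a) (f b)) {u v : V} (h : G.Reachable u v) :
    H.Reachable (f u) (f v) := by
  obtain ⟨w⟩ := h
  induction w with
  | nil => exact SimpleGraph.Reachable.refl _
  | cons h _ ih => exact (hf _ _ h).trans ih

lemma exists_adj_of_connected {V : Type*} {G : SimpleGraph V} {s : Set V}
    (hc : (G.induce s).Connected) {x y : V} (hx : x ∈ s) (hy : y ∈ s) (hxy : x ≠ y) :
    ∃ z ∈ s, G.Adj x z := by
  have hr : (G.induce s).Reachable ⟨x, hx⟩ ⟨y, hy⟩ := hc.preconnected _ _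
  obtain ⟨w⟩ := hr
  cases w with
  | nil => exact absurd (rfl : x = x) hxy
  | @cons _ b _ h _ => exact ⟨b.1, b.2, h⟩

lemma adjA_iff {n k : ℕ} (h1 : 1 < k) (h2 : k < n) (x y : Fin (n+2)) :
    (almostPath (n+1) (k+1)).Adj x y ↔
      ((x.1+1 = y.1 ∧ y.1 ≤ n) ∨ (y.1+1 = x.1 ∧ x.1 ≤ n) ∨
       (x.1 = k ∧ y.1 = n+1) ∨ (y.1 = k ∧ x.1 = n+1)) := by
  simp only [almostPath, SimpleGraph.fromRel_adj, ne_eq, Fin.ext_iff]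
  omega

lemma adjD_iff {n k : ℕ} (h1 : 1 < k) (h2 : k < n) (x y : Fin (n+1)) :
    (pathTriangle n k).Adj x y ↔
      ((x.1+1 = y.1 ∧ y.1 < n) ∨ (y.1+1 = x.1 ∧ x.1 < n) ∨
       (x.1 = k-1 ∧ y.1 = n) ∨ (y.1 = k-1 ∧ x.1 = n) ∨
       (x.1 = k ∧ y.1 = n) ∨ (y.1 = k ∧ x.1 = n)) := by
  simp only [pathTriangle, SimpleGraph.fromRel_adj, ne_eq, Fin.ext_iff]
  omega

lemma succAbove_val {n : ℕ} (p : Fin (n+2)) (m : Fin (n+1)) :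
    ((p.succAbove m) : ℕ) = if m.1 < p.1 then m.1 else m.1 + 1 := by
  simp only [Fin.succAbove, Fin.lt_def, Fin.coe_castSucc]
  split_ifs <;> simp

def phi (n k : ℕ) (h2 : k < n) (t : Fin (n+1)) (i : Fin (n+2)) : Fin (n+1) :=
  if h : i.1 < k then ⟨i.1, by omega⟩ else if i.1 = k then t else ⟨i.1 - 1, by omega⟩

lemma phi_val (n k : ℕ) (h2 : k < n) (t : Fin (n+1)) (i : Fin (n+2)) :
    (phi n k h2 t i).1 = if i.1 < k then i.1 else if i.1 = k then t.1 else i.1 - 1 := by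
  unfold phi; split_ifs <;> rfl

lemma phi_adj (n k : ℕ) (h1 : 1 < k) (h2 : k < n) (t : Fin (n+1))
    (ht : t.1 = k ∨ t.1 = k-1 ∨ t.1 = n) (a b : Fin (n+2))
    (hab : (almostPath (n+1) (k+1)).Adj a b) :
    (pathTriangle n k).Adj (phi n k h2 t a) (phi n k h2 t b) ∨
      phi n k h2 t a = phi n k h2 t b := by
  rw [adjA_iff h1 h2] at hab
  rw [adjD_iff h1 h2, Fin.ext_iff, phi_val n k h2 t a, phi_val n k h2 t b]
  have ha := a.isLt
  have hb := b.isLt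
  split_ifs <;> omega

lemma forward_conn (n k : ℕ) (h1 : 1 < k) (h2 : k < n) (I : Finset (Fin (n+2)))
    (hI : ConnSet (almostPath (n+1) (k+1)) I)
    (hne : I ≠ {(⟨k, Nat.lt_of_lt_of_le h2 (Nat.le_add_right n 2)⟩ : Fin (n+2))}) :
    ConnSet (pathTriangle n k) (del (⟨k, Nat.lt_of_lt_of_le h2 (Nat.le_add_right n 2)⟩ : Fin (n+2)) I) := by
  have hk : k < n + 2 := by omega
  set p : Fin (n+2) := ⟨k, hk⟩ with hp
  have hpv : (p : Fin (n+2)).val = k := rfl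
  set t : Fin (n+1) :=
    if (⟨k+1, by omega⟩ : Fin (n+2)) ∈ I then ⟨k, by omega⟩
    else if (⟨k-1, by omega⟩ : Fin (n+2)) ∈ I then ⟨k-1, by omega⟩
    else ⟨n, by omega⟩ with htdef
  have ht : t.1 = k ∨ t.1 = k-1 ∨ t.1 = n := by
    rw [htdef]; split_ifs <;> simp
  have htmem : p ∈ I → p.succAbove t ∈ I := by
    intro hpI
    rw [htdef]
    split_ifs with hA hB
    · have : p.succAbove ⟨k, by omega⟩ = (⟨k+1, by omega⟩ : Fin (n+2)) := by
        apply Fin.ext; rw [succAbove_val]; simp [hpv]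
      rw [this]; exact hA
    · have : p.succAbove ⟨k-1, by omega⟩ = (⟨k-1, by omega⟩ : Fin (n+2)) := by
        apply Fin.ext; rw [succAbove_val]; simp [hpv]; omega
      rw [this]; exact hB
    · have hex : ∃ y ∈ I, y ≠ p := by
        by_contra hcon
        push_neg at hcon
        apply hne
        apply Finset.eq_singleton_iff_unique_mem.mpr ⟨hpI, hcon⟩
      obtain ⟨y, hy, hyp⟩ := hex
      obtain ⟨z, hz, hadj⟩ := exists_adj_of_connected hI.2
        (Finset.mem_coe.mpr hpI) (Finset.mem_coe.mpr hy) (Ne.symm hyp)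
      rw [adjA_iff h1 h2] at hadj
      have hzI : z ∈ I := Finset.mem_coe.mp hz
      have hzval : z.1 = k+1 ∨ z.1 = k-1 ∨ z.1 = n+1 := by
        simp only [hp] at hadj; omega
      rcases hzval with h | h | h
      · exact absurd (show (⟨k+1, by omega⟩ : Fin (n+2)) ∈ I by
          rwa [show (⟨k+1, by omega⟩ : Fin (n+2)) = z from (Fin.ext h.symm)]) hA
      · exact absurd (show (⟨k-1, by omega⟩ : Fin (n+2)) ∈ I by
          rwa [show (⟨k-1, by omega⟩ : Fin (n+2)) = z from (Fin.ext h.symm)]) hB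
      · have : p.succAbove ⟨n, by omega⟩ = z := by
          apply Fin.ext; rw [succAbove_val, h]; simp [hpv]; omega
        rw [this]; exact hzI
  have hmem : ∀ i ∈ I, phi n k h2 t i ∈ del p I := by
    intro i hi
    simp only [del, Finset.mem_filter, Finset.mem_univ, true_and]
    by_cases hip : i = p
    · have hik : i.1 = k := by rw [hip]
      have hphit : phi n k h2 t i = t := by
        unfold phi; rw [dif_neg (by omega), if_pos hik]
      rw [hphit]; exact htmem (hip ▸ hi)
    · have hipv : i.1 ≠ k := fun h => hip (Fin.ext h)
      have : p.succAbove (phi n k h2 t i) = i := by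
        apply Fin.ext
        rw [succAbove_val, phi_val]
        have hi2 := i.isLt
        split_ifs <;> omega
      rw [this]; exact hi
  have hphipsi : ∀ m : Fin (n+1), phi n k h2 t (p.succAbove m) = m := by
    intro m
    apply Fin.ext
    rw [phi_val]
    have h1' := succAbove_val p m
    have := m.isLt
    split_ifs at h1' ⊢ <;> omega
  constructor
  · obtain ⟨y, hy⟩ := hI.1
    exact ⟨phi n k h2 t y, hmem y hy⟩
  · rw [SimpleGraph.connected_iff]
    constructor
    · intro u v
      have hu : p.succAbove u.1 ∈ I := by
        have := u.2
        simp only [Finset.mem_coe, del, Finset.mem_filter] at this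
        exact this.2
      have hv : p.succAbove v.1 ∈ I := by
        have := v.2
        simp only [Finset.mem_coe, del, Finset.mem_filter] at this
        exact this.2
      set F : (↑I : Set (Fin (n+2))) → (↑(del p I) : Set (Fin (n+1))) :=
        fun x => ⟨phi n k h2 t x.1, Finset.mem_coe.mpr (hmem x.1 (Finset.mem_coe.mp x.2))⟩
        with hF
      have hFadj : ∀ a b, ((almostPath (n+1) (k+1)).induce ↑I).Adj a b →
          ((pathTriangle n k).induce ↑(del p I)).Reachable (F a) (F b) := by
        intro a b hab
        rcases phi_adj n k h1 h2 t ht a.1 b.1 hab with h | h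
        · exact SimpleGraph.Adj.reachable (by exact h)
        · rw [show F a = F b from Subtype.ext h]
      have hr := reachable_map F hFadj
        (hI.2.preconnected ⟨p.succAbove u.1, Finset.mem_coe.mpr hu⟩
          ⟨p.succAbove v.1, Finset.mem_coe.mpr hv⟩)
      rwa [show F ⟨p.succAbove u.1, Finset.mem_coe.mpr hu⟩ = u from
             Subtype.ext (hphipsi u.1),
           show F ⟨p.succAbove v.1, Finset.mem_coe.mpr hv⟩ = v from
             Subtype.ext (hphipsi v.1)] at hr
    · obtain ⟨y, hy⟩ := hI.1
      exact ⟨⟨phi n k h2 t y, Finset.mem_coe.mpr (hmem y hy)⟩⟩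

lemma backward_conn (n k : ℕ) (h1 : 1 < k) (h2 : k < n) (J : Finset (Fin (n+1)))
    (hJ : ConnSet (pathTriangle n k) J) :
    ∃ I : Finset (Fin (n+2)), ConnSet (almostPath (n+1) (k+1)) I ∧
      del (⟨k, Nat.lt_of_lt_of_le h2 (Nat.le_add_right n 2)⟩ : Fin (n+2)) I = J := by
  have hk : k < n+2 := by omega
  set p : Fin (n+2) := ⟨k, hk⟩ with hp
  have hpv : (p : Fin (n+2)).val = k := rfl
  set I : Finset (Fin (n+2)) :=
    if ((⟨k-1, by omega⟩ : Fin (n+1)) ∈ J ∨ (⟨k, by omega⟩ : Fin (n+1)) ∈ J)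
    then insert p (J.image p.succAbove) else J.image p.succAbove with hIdef
  have hpsub : ∀ j : Fin (n+1), j ∈ J → p.succAbove j ∈ I := by
    intro j hj
    rw [hIdef]; split_ifs
    · exact Finset.mem_insert_of_mem (Finset.mem_image_of_mem _ hj)
    · exact Finset.mem_image_of_mem _ hj
  have hpI : ((⟨k-1, by omega⟩ : Fin (n+1)) ∈ J ∨ (⟨k, by omega⟩ : Fin (n+1)) ∈ J) → p ∈ I := by
    intro hcc; rw [hIdef, if_pos hcc]; exact Finset.mem_insert_self _ _
  have hmemI : ∀ x ∈ I, x = p ∨ ∃ j ∈ J, p.succAbove j = x := by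
    intro x hx
    rw [hIdef] at hx
    split_ifs at hx with hcc
    · rcases Finset.mem_insert.mp hx with h | h
      · exact Or.inl h
      · exact Or.inr (Finset.mem_image.mp h)
    · exact Or.inr (Finset.mem_image.mp hx)
  have hIc : p ∈ I → ((⟨k-1, by omega⟩ : Fin (n+1)) ∈ J ∨ (⟨k, by omega⟩ : Fin (n+1)) ∈ J) := by
    intro hpm
    by_contra hnc
    rw [hIdef, if_neg hnc] at hpm
    obtain ⟨j, _, he⟩ := Finset.mem_image.mp hpm
    exact Fin.succAbove_ne p j he
  have hcOf : ∀ x : Fin (n+1), x ∈ J → (x.1 = k-1 ∨ x.1 = k) →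
      ((⟨k-1, by omega⟩ : Fin (n+1)) ∈ J ∨ (⟨k, by omega⟩ : Fin (n+1)) ∈ J) := by
    intro x hx hv
    rcases hv with hv | hv
    · exact Or.inl (by rwa [show (⟨k-1, by omega⟩ : Fin (n+1)) = x from Fin.ext hv.symm])
    · exact Or.inr (by rwa [show (⟨k, by omega⟩ : Fin (n+1)) = x from Fin.ext hv.symm])
  have mkAdj : ∀ x y : Fin (n+2),
      ((x.1+1 = y.1 ∧ y.1 ≤ n) ∨ (y.1+1 = x.1 ∧ x.1 ≤ n) ∨
       (x.1 = k ∧ y.1 = n+1) ∨ (y.1 = k ∧ x.1 = n+1)) →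
      (almostPath (n+1) (k+1)).Adj x y :=
    fun x y h => (adjA_iff h1 h2 x y).mpr h
  have hstep : ∀ (x y : Fin (n+2)) (hx : x ∈ I) (hy : y ∈ I),
      (almostPath (n+1) (k+1)).Adj x y →
      ((almostPath (n+1) (k+1)).induce (↑I : Set (Fin (n+2)))).Reachable
        ⟨x, Finset.mem_coe.mpr hx⟩ ⟨y, Finset.mem_coe.mpr hy⟩ :=
    fun x y hx hy h => SimpleGraph.Adj.reachable (by exact h)
  refine ⟨I, ⟨?_, ?_⟩, ?_⟩
  · obtain ⟨j, hj⟩ := hJ.1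
    exact ⟨p.succAbove j, hpsub j hj⟩
  · rw [SimpleGraph.connected_iff]
    constructor
    · -- preconnected
      have key : ∀ a b : (↑J : Set (Fin (n+1))),
          ((pathTriangle n k).induce (↑J : Set (Fin (n+1)))).Adj a b →
          ((almostPath (n+1) (k+1)).induce (↑I : Set (Fin (n+2)))).Reachable
            ⟨p.succAbove a.1, Finset.mem_coe.mpr (hpsub a.1 (Finset.mem_coe.mp a.2))⟩
            ⟨p.succAbove b.1, Finset.mem_coe.mpr (hpsub b.1 (Finset.mem_coe.mp b.2))⟩ := by
        intro a b hab
        have hDab : (pathTriangle n k).Adj a.1 b.1 := hab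
        rw [adjD_iff h1 h2] at hDab
        have haJ : a.1 ∈ J := Finset.mem_coe.mp a.2
        have hbJ : b.1 ∈ J := Finset.mem_coe.mp b.2
        have hsa := succAbove_val p a.1
        have hsb := succAbove_val p b.1
        have haL := a.1.isLt
        have hbL := b.1.isLt
        by_cases hS1 :
            (((p.succAbove a.1) : ℕ)+1 = ((p.succAbove b.1) : ℕ) ∧ ((p.succAbove b.1) : ℕ) ≤ n) ∨
            (((p.succAbove b.1) : ℕ)+1 = ((p.succAbove a.1) : ℕ) ∧ ((p.succAbove a.1) : ℕ) ≤ n) ∨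
            (((p.succAbove a.1) : ℕ) = k ∧ ((p.succAbove b.1) : ℕ) = n+1) ∨
            (((p.succAbove b.1) : ℕ) = k ∧ ((p.succAbove a.1) : ℕ) = n+1)
        · exact hstep _ _ (hpsub a.1 haJ) (hpsub b.1 hbJ) (mkAdj _ _ hS1)
        · have hval : a.1.1 = k-1 ∨ a.1.1 = k ∨ b.1.1 = k-1 ∨ b.1.1 = k := by
            split_ifs at hsa hsb <;> omega
          have hcc : ((⟨k-1, by omega⟩ : Fin (n+1)) ∈ J ∨ (⟨k, by omega⟩ : Fin (n+1)) ∈ J) := by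
            rcases hval with h | h | h | h
            · exact hcOf a.1 haJ (Or.inl h)
            · exact hcOf a.1 haJ (Or.inr h)
            · exact hcOf b.1 hbJ (Or.inl h)
            · exact hcOf b.1 hbJ (Or.inr h)
          have hA1 : (almostPath (n+1) (k+1)).Adj (p.succAbove a.1) p := by
            apply mkAdj
            split_ifs at hsa hsb <;> omega
          have hA2 : (almostPath (n+1) (k+1)).Adj p (p.succAbove b.1) := by
            apply mkAdj
            split_ifs at hsa hsb <;> omega
          exact (hstep _ p (hpsub a.1 haJ) (hpI hcc) hA1).trans (hstep p _ (hpI hcc) (hpsub b.1 hbJ) hA2)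
      have hred : ∀ x : (↑I : Set (Fin (n+2))), ∃ (j : Fin (n+1)) (hj : j ∈ J),
          ((almostPath (n+1) (k+1)).induce (↑I : Set (Fin (n+2)))).Reachable x
            ⟨p.succAbove j, Finset.mem_coe.mpr (hpsub j hj)⟩ := by
        intro x
        rcases hmemI x.1 (Finset.mem_coe.mp x.2) with hx | ⟨j, hj, he⟩
        · have hpm : p ∈ I := hx ▸ Finset.mem_coe.mp x.2
          rcases hIc hpm with hm | hm
          · refine ⟨⟨k-1, by omega⟩, hm, SimpleGraph.Adj.reachable ?_⟩
            show (almostPath (n+1) (k+1)).Adj x.1 (p.succAbove ⟨k-1, by omega⟩)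
            have hadj : (almostPath (n+1) (k+1)).Adj p (p.succAbove ⟨k-1, by omega⟩) := by
              apply mkAdj
              have hs := succAbove_val p (⟨k-1, by omega⟩ : Fin (n+1))
              have hsv : ((⟨k-1, by omega⟩ : Fin (n+1)) : ℕ) = k - 1 := rfl
              split_ifs at hs <;> omega
            simpa [hx] using hadj
          · refine ⟨⟨k, by omega⟩, hm, SimpleGraph.Adj.reachable ?_⟩
            show (almostPath (n+1) (k+1)).Adj x.1 (p.succAbove ⟨k, by omega⟩)
            have hadj : (almostPath (n+1) (k+1)).Adj p (p.succAbove ⟨k, by omega⟩) := by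
              apply mkAdj
              have hs := succAbove_val p (⟨k, by omega⟩ : Fin (n+1))
              have hsv : ((⟨k, by omega⟩ : Fin (n+1)) : ℕ) = k := rfl
              split_ifs at hs <;> omega
            simpa [hx] using hadj
        · exact ⟨j, hj, by
            rw [show x = (⟨p.succAbove j, Finset.mem_coe.mpr (hpsub j hj)⟩ :
              (↑I : Set (Fin (n+2)))) from Subtype.ext he.symm]⟩
      intro u v
      obtain ⟨ja, hja, hra⟩ := hred u
      obtain ⟨jb, hjb, hrb⟩ := hred v
      have hmid := reachable_map
        (fun j : (↑J : Set (Fin (n+1))) =>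
          (⟨p.succAbove j.1, Finset.mem_coe.mpr (hpsub j.1 (Finset.mem_coe.mp j.2))⟩ :
            (↑I : Set (Fin (n+2)))))
        key (hJ.2.preconnected ⟨ja, Finset.mem_coe.mpr hja⟩ ⟨jb, Finset.mem_coe.mpr hjb⟩)
      exact hra.trans (hmid.trans hrb.symm)
    · obtain ⟨j, hj⟩ := hJ.1
      exact ⟨⟨p.succAbove j, Finset.mem_coe.mpr (hpsub j hj)⟩⟩
  · ext m
    simp only [del, Finset.mem_filter, Finset.mem_univ, true_and]
    constructor
    · intro hm
      rcases hmemI _ hm with h | ⟨j, hj, he⟩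
      · exact absurd h (Fin.succAbove_ne p m)
      · exact (Fin.succAbove_right_injective he) ▸ hj
    · exact hpsub m

/-- For `1 < k < n`, the connected subgraph arrangement
`𝒜_{Δ_{n,k}}` in `ℚ^{n+1}` is the restriction of `𝒜_{A_{n+1,k+1}}` (in `ℚ^{n+2}`) to
the coordinate hyperplane `ker x_{k+1}`: identifying `ker x_{k+1}` with `ℚ^{n+1}` by
deleting the `(k+1)`-st coordinate (via `insertZero`), the set
`{H ∩ ker x_{k+1} : H ∈ 𝒜_{A_{n+1,k+1}}, H ≠ ker x_{k+1}}` equals the set of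
hyperplanes of `𝒜_{Δ_{n,k}}`. (In the 0-based indexing of the formalization the paper
coordinate `x_{k+1}` is the projection onto the coordinate `⟨k, _⟩ : Fin (n+2)`.) -/
theorem csa_pathTriangle_restriction (n k : ℕ) (h1 : 1 < k) (h2 : k < n) :
    (fun H => Submodule.comap (insertZero (⟨k, by omega⟩ : Fin (n + 2))) H) ''
        (csa (almostPath (n + 1) (k + 1)) \
          {LinearMap.ker (LinearMap.proj (⟨k, by omega⟩ : Fin (n + 2)) :
            (Fin (n + 2) → ℚ) →ₗ[ℚ] ℚ)}) =
      csa (pathTriangle n k) := by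
  have hk : k < n + 2 := by omega
  ext H
  simp only [Set.mem_image, Set.mem_diff, Set.mem_singleton_iff, csa, Set.mem_setOf_eq]
  constructor
  · rintro ⟨H', ⟨⟨I, hIconn, rfl⟩, hne⟩, rfl⟩
    have hIne : I ≠ {(⟨k, by omega⟩ : Fin (n+2))} := by
      rintro rfl
      apply hne
      rw [linForm_singleton]
    exact ⟨del (⟨k, by omega⟩ : Fin (n+2)) I,
      forward_conn n k h1 h2 I hIconn hIne, comap_ker _ I⟩
  · rintro ⟨J, hJconn, rfl⟩
    obtain ⟨I, hIconn, hdel⟩ := backward_conn n k h1 h2 J hJconn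
    refine ⟨LinearMap.ker (linForm I), ⟨⟨I, hIconn, rfl⟩, ?_⟩, ?_⟩
    · intro hEq
      have h3 : Submodule.comap (insertZero (⟨k, by omega⟩ : Fin (n + 2)))
          (LinearMap.ker (linForm I)) = ⊤ := by
        rw [hEq, ← LinearMap.ker_comp, proj_comp_insertZero, LinearMap.ker_zero]
      rw [comap_ker, hdel] at h3
      exact linForm_ker_ne_top hJconn.1 h3
    · rw [comap_ker, hdel]
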